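/- Every finitely generated Hermann foliation 𝒟 on a manifold M is the image under the anchor map of an almost-Lie algebroid structure on a trivial vector bundle: if X₁,…,X_r generate 𝒟 and [X_i,X_j]=Σ_k c^k_{ij}X_k with c^k_{ij}=−c^k_{ji} smooth, then the trivial bundle ℝʳ×M with ρ(e_i)=X_i and [e_i,e_j]=Σ_k c^k_{ij}e_k (extended by Leibniz) is an almost-Lie algebroid with ρ(Γ(A))=𝒟. -/
import Mathlib


/-- Every finitely generated Hermann foliation `𝒟` on a manifold `M` is the image under
the anchor map of an almost-Lie algebroid structure on a trivial vector bundle: if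
`X₁, …, X_r` generate `𝒟` and `[Xᵢ, Xⱼ] = Σ_k c^k_{ij} X_k` with `c^k_{ij} = −c^k_{ji}`
smooth functions, then the trivial bundle `ℝʳ × M` (whose sections form the free module
`Fin r → R` over `R = 𝒪(M)`) with `ρ(eᵢ) = Xᵢ` and `[eᵢ, eⱼ] = Σ_k c^k_{ij} e_k`,
extended by `R`-linearity and the Leibniz rule, is an almost-Lie algebroid (skew bracket,
Leibniz rule, anchor-morphism condition) with `ρ(Γ(A)) = 𝒟 = span(X₁, …, X_r)`. -/
theorem stmt12 {k R : Type*} [Field k] [CommRing R] [Algebra k R]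
    (r : ℕ) (X : Fin r → Derivation k R R)
    (c : Fin r → Fin r → Fin r → R)
    (hskew : ∀ i j l, c i j l = - c j i l)
    (hbr : ∀ i j, ⁅X i, X j⁆ = ∑ l, c i j l • X l) :
    ∃ (ρ : (Fin r → R) →ₗ[R] Derivation k R R)
      (β : (Fin r → R) → (Fin r → R) → (Fin r → R)),
      (∀ i, ρ (Pi.single i 1) = X i) ∧
      (∀ i j, β (Pi.single i 1) (Pi.single j 1)
        = ∑ l, c i j l • (Pi.single l 1 : Fin r → R)) ∧
      (∀ a b, β a b = - β b a) ∧
      (∀ (a b : Fin r → R) (f : R), β a (f • b) = f • β a b + ρ a f • b) ∧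
      (∀ a b, ρ (β a b) = ⁅ρ a, ρ b⁆) ∧
      LinearMap.range ρ = Submodule.span R (Set.range X) := by
  classical
  set ρ : (Fin r → R) →ₗ[R] Derivation k R R :=
    { toFun := fun a => ∑ i, a i • X i
      map_add' := by intro a b; simp [add_smul, Finset.sum_add_distrib]
      map_smul' := by intro f a; simp [mul_smul, Finset.smul_sum] } with hρdef
  have hρa : ∀ (a : Fin r → R) (x : R), ρ a x = ∑ i, a i * X i x := by
    intro a x
    show (∑ i, a i • X i) x = _
    have h1 : ⇑(∑ i, a i • X i : Derivation k R R) = ∑ i, ⇑(a i • X i) :=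
      map_sum (Derivation.coeFnAddMonoidHom) _ _
    rw [h1, Finset.sum_apply]
    simp [smul_eq_mul]
  set β : (Fin r → R) → (Fin r → R) → (Fin r → R) := fun a b l =>
    (∑ i, ∑ j, a i * b j * c i j l) + ρ a (b l) - ρ b (a l) with hβdef
  have hsingle : ∀ i, ρ (Pi.single i 1) = X i := by
    intro i
    ext x
    rw [hρa]
    simp [Pi.single_apply, ite_smul]
  have hρsingle : ∀ (i : Fin r) (l : Fin r) (m : Fin r → R) (x : R),
      ρ m ((Pi.single i 1 : Fin r → R) l) = 0 := by
    intro i l m x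
    rcases eq_or_ne l i with h | h
    · subst h; rw [Pi.single_eq_same]; exact Derivation.map_one_eq_zero _
    · simp [Pi.single_eq_of_ne h]
  refine ⟨ρ, β, hsingle, ?_, ?_, ?_, ?_, ?_⟩
  · -- basis bracket
    intro i j
    funext l
    have h1 : (∑ i', ∑ j', (Pi.single i 1 : Fin r → R) i' * (Pi.single j 1 : Fin r → R) j' * c i' j' l)
        = c i j l := by
      simp [Pi.single_apply, Finset.mul_sum, ite_and]
    have e : ∀ (m : Fin r → R) (j : Fin r), ρ m ((Pi.single j 1 : Fin r → R) l) = 0 := by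
      intro m j
      rcases eq_or_ne l j with h | h
      · subst h; rw [Pi.single_eq_same]; exact Derivation.map_one_eq_zero _
      · rw [Pi.single_eq_of_ne h]; exact map_zero _
    simp only [hβdef, e, h1, add_zero, sub_zero]
    rw [Finset.sum_apply]
    simp [Pi.single_apply, mul_comm]
  · -- skew
    intro a b
    funext l
    have : (∑ i, ∑ j, a i * b j * c i j l) = - ∑ i, ∑ j, b i * a j * c i j l := by
      rw [Finset.sum_comm]
      rw [← Finset.sum_neg_distrib]
      refine Finset.sum_congr rfl fun j _ => ?_
      rw [← Finset.sum_neg_distrib]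
      refine Finset.sum_congr rfl fun i _ => ?_
      rw [hskew i j l]; ring
    simp only [hβdef, Pi.neg_apply, this]
    ring
  · -- Leibniz
    intro a b f
    funext l
    have hfb : ρ (f • b) = f • ρ b := map_smul ρ f b
    simp only [hβdef, Pi.add_apply, Pi.smul_apply, smul_eq_mul, hfb,
      Derivation.smul_apply, Derivation.leibniz]
    have : (∑ i, ∑ j, a i * (f * b j) * c i j l) = f * ∑ i, ∑ j, a i * b j * c i j l := by
      rw [Finset.mul_sum]
      refine Finset.sum_congr rfl fun i _ => ?_
      rw [Finset.mul_sum]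
      exact Finset.sum_congr rfl fun j _ => by ring
    rw [this]
    ring
  · -- anchor morphism
    intro a b
    ext x
    rw [Derivation.commutator_apply]
    simp only [hβdef]
    simp only [hρa]
    -- expand everything
    have keyX : ∀ i j : Fin r, X i (X j x) - X j (X i x) = ∑ l, c i j l * X l x := by
      intro i j
      have := congrArg (fun D : Derivation k R R => D x) (hbr i j)
      simp only [Derivation.commutator_apply] at this
      rw [this]
      have h1 : ⇑(∑ l, c i j l • X l : Derivation k R R) = ∑ l, ⇑(c i j l • X l) :=
        map_sum (Derivation.coeFnAddMonoidHom) _ _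
      rw [h1, Finset.sum_apply]
      simp [smul_eq_mul]
    have expandL : ∀ i, a i * X i (∑ j, b j * X j x)
        = ∑ j, (a i * X i (b j) * X j x + a i * b j * X i (X j x)) := by
      intro i
      rw [map_sum, Finset.mul_sum]
      refine Finset.sum_congr rfl fun j _ => ?_
      rw [Derivation.leibniz]
      simp only [smul_eq_mul]
      ring
    have expandR : ∀ j, b j * X j (∑ i, a i * X i x)
        = ∑ i, (b j * X j (a i) * X i x + b j * a i * X j (X i x)) := by
      intro j
      rw [map_sum, Finset.mul_sum]
      refine Finset.sum_congr rfl fun i _ => ?_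
      rw [Derivation.leibniz]
      simp only [smul_eq_mul]
      ring
    simp only [expandL, expandR]
    -- LHS: ∑ l ((∑ i ∑ j a i * b j * c i j l) + ρ a (b l) - ρ b (a l)) * X l x
    have lhs1 : ∑ l, ((∑ i, ∑ j, a i * b j * c i j l)
          + (∑ i, a i * X i (b l)) - (∑ i, b i * X i (a l))) * X l x
        = (∑ l, (∑ i, ∑ j, a i * b j * c i j l) * X l x)
          + (∑ l, (∑ i, a i * X i (b l)) * X l x)
          - (∑ l, (∑ i, b i * X i (a l)) * X l x) := by
      rw [← Finset.sum_add_distrib, ← Finset.sum_sub_distrib]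
      refine Finset.sum_congr rfl fun l _ => by ring
    rw [lhs1]
    have hc : ∑ l, (∑ i, ∑ j, a i * b j * c i j l) * X l x
        = ∑ i, ∑ j, a i * b j * (X i (X j x) - X j (X i x)) := by
      have key' : ∀ i j, a i * b j * (X i (X j x) - X j (X i x))
          = ∑ l, a i * b j * (c i j l * X l x) := by
        intro i j; rw [keyX, Finset.mul_sum]
      simp only [key', Finset.sum_mul]
      rw [Finset.sum_comm]
      refine Finset.sum_congr rfl fun i _ => ?_
      rw [Finset.sum_comm]
      refine Finset.sum_congr rfl fun j _ => ?_
      refine Finset.sum_congr rfl fun l _ => by ring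
    rw [hc]
    have h4 : ∑ i, ∑ j, a i * b j * (X i (X j x) - X j (X i x))
        = (∑ i, ∑ j, a i * b j * X i (X j x)) - ∑ i, ∑ j, b j * a i * X j (X i x) := by
      rw [← Finset.sum_sub_distrib]
      refine Finset.sum_congr rfl fun i _ => ?_
      rw [← Finset.sum_sub_distrib]
      exact Finset.sum_congr rfl fun j _ => by ring
    have h5 : (∑ i, ∑ j, b j * a i * X j (X i x)) = ∑ j, ∑ i, b j * a i * X j (X i x) :=
      Finset.sum_comm
    have h6 : ∑ l, (∑ i, a i * X i (b l)) * X l x = ∑ i, ∑ l, a i * X i (b l) * X l x := by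
      simp only [Finset.sum_mul]; exact Finset.sum_comm
    have h7 : ∑ l, (∑ i, b i * X i (a l)) * X l x = ∑ i, ∑ l, b i * X i (a l) * X l x := by
      simp only [Finset.sum_mul]; exact Finset.sum_comm
    rw [h4, h5, h6, h7]
    simp only [Finset.sum_add_distrib]
    ring_nf
  · -- range
    apply le_antisymm
    · rintro _ ⟨a, rfl⟩
      show (∑ i, a i • X i) ∈ _
      exact Submodule.sum_mem _ fun i _ =>
        Submodule.smul_mem _ _ (Submodule.subset_span ⟨i, rfl⟩)
    · rw [Submodule.span_le]
      rintro _ ⟨i, rfl⟩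
      exact ⟨Pi.single i 1, hsingle i⟩
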